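/- (X-distance preservation) Let C be a CSS code of distance d with X-logical operator X̄ of weight w supported on Q, and let the cone code be built with f₁ given by the inclusion of Q (columns of f₁ are standard basis vectors indexed by Q) and ∂₁ an incidence matrix of a hypergraph on w vertices with Cheeger constant h ≥ 1. Let X̄₂ be any X-logical operator of C of weight w₂ ≥ d such that X̄·X̄₂ also has weight ≥ d. Then for every subset R ⊆ Q, the vector L = X̄₂ + ∑_{q∈R} S_q, where S_q = (e_q, ∂₁-column corresponding to q) are the new X-stabilizer generators, has Hamming weight wt(L) ≥ d. -/

import Mathlib

open Matrix Finset

theorem my_filter_disjSum {α β} (s : Finset α) (t : Finset β) (p : α ⊕ β → Prop)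
    [DecidablePred p] :
    (s.disjSum t).filter p = (s.filter (p ∘ Sum.inl)).disjSum (t.filter (p ∘ Sum.inr)) := by
  ext x
  cases x <;> simp [Finset.mem_filter]

theorem my_hn_elim {n m : ℕ} (f : Fin n → ZMod 2) (g : Fin m → ZMod 2) :
    hammingNorm (Sum.elim f g) = hammingNorm f + hammingNorm g := by
  classical
  simp only [hammingNorm]
  rw [← Finset.univ_disjSum_univ, my_filter_disjSum, Finset.card_disjSum]
  rfl

section
variable {n w : ℕ} {q : Fin w → Fin n}

theorem my_f1_apply (hq : Function.Injective q) (v : Fin w → ZMod 2) (j : Fin w) :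
    (Matrix.of fun i j => if i = q j then (1 : ZMod 2) else 0).mulVec v (q j) = v j := by
  simp only [mulVec, dotProduct, of_apply, hq.eq_iff, ite_mul, one_mul, zero_mul]
  rw [Finset.sum_ite_eq]
  simp

theorem my_f1_apply' (v : Fin w → ZMod 2) (i : Fin n) (hi : ∀ j, i ≠ q j) :
    (Matrix.of fun i j => if i = q j then (1 : ZMod 2) else 0).mulVec v i = 0 := by
  simp only [mulVec, dotProduct, of_apply]
  exact Finset.sum_eq_zero fun j _ => by simp [hi j]

theorem my_f1_norm (hq : Function.Injective q) (v : Fin w → ZMod 2) :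
    hammingNorm ((Matrix.of fun i j => if i = q j then (1 : ZMod 2) else 0).mulVec v)
      = hammingNorm v := by
  classical
  simp only [hammingNorm]
  rw [show (univ.filter fun i =>
        (Matrix.of fun i j => if i = q j then (1 : ZMod 2) else 0).mulVec v i ≠ 0)
      = (univ.filter fun j => v j ≠ 0).image q from ?_,
    Finset.card_image_of_injective _ hq]
  ext i
  simp only [Finset.mem_filter, Finset.mem_image, Finset.mem_univ, true_and]
  constructor
  · intro hi
    by_cases h : ∃ j, i = q j
    · obtain ⟨j, rfl⟩ := h
      exact ⟨j, by rwa [my_f1_apply hq] at hi, rfl⟩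
    · exact absurd (my_f1_apply' v i (by push_neg at h; exact h)) hi
  · rintro ⟨j, hj, rfl⟩
    rwa [my_f1_apply hq]

theorem my_f1_one (hq : Function.Injective q) :
    (Matrix.of fun i j => if i = q j then (1 : ZMod 2) else 0).mulVec (fun _ => 1)
      = fun i => if i ∈ Finset.univ.image q then (1 : ZMod 2) else 0 := by
  funext i
  by_cases h : ∃ j, i = q j
  · obtain ⟨j, rfl⟩ := h
    rw [my_f1_apply hq]
    simp
  · push_neg at h
    rw [my_f1_apply' _ i h]
    simp only [Finset.mem_image, Finset.mem_univ, true_and]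
    rw [if_neg]
    rintro ⟨j, rfl⟩
    exact h j rfl

end

theorem my_tri {ι : Type*} [Fintype ι] (a b : ι → ZMod 2) :
    hammingNorm a ≤ hammingNorm (a + b) + hammingNorm b := by
  have h := hammingDist_triangle a (a + b) 0
  simp only [hammingDist_zero_right] at h
  rw [hammingDist_eq_hammingNorm] at h
  have e : -a + (a + b) = b := neg_add_cancel_left a b
  rw [e] at h; omega

theorem my_compl {w : ℕ} (v : Fin w → ZMod 2) :
    hammingNorm (fun j => 1 + v j) + hammingNorm v = w := by
  classical
  simp only [hammingNorm]
  have h : ∀ x : ZMod 2, (1 + x ≠ 0) ↔ ¬ (x ≠ 0) := by decide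
  simp only [h]
  rw [add_comm, Finset.card_filter_add_card_filter_not]
  simp

/-- X-distance preservation. Let `X̄` (of weight `w`, supported on the image of
the injection `q`) be the measured X-logical, `f₁` its inclusion matrix, `∂₁`
the incidence matrix of a hypergraph on `w` vertices with even-weight rows and
Cheeger constant at least 1. If `X̄₂` is an X-logical operator of weight
`w₂ ≥ d` with `wt(X̄ + X̄₂) ≥ d`, then for every subset `R` of the support of
`X̄` (encoded by its indicator `v`), the operator
`L = X̄₂ + ∑_{q ∈ R} S_q = (X̄₂ + f₁ v, ∂₁ v)` has Hamming weight at least `d`. -/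
theorem coneCode_X_distance (n nX nZ m w d : ℕ)
    (HX : Matrix (Fin nX) (Fin n) (ZMod 2))
    (HZ : Matrix (Fin nZ) (Fin n) (ZMod 2))
    (q : Fin w → Fin n) (hq : Function.Injective q)
    (D1 : Matrix (Fin m) (Fin w) (ZMod 2))
    (heven : D1.mulVec (fun _ => 1) = 0)
    (hcheeger : ∀ v : Fin w → ZMod 2, v ≠ 0 → 2 * hammingNorm v ≤ w →
      hammingNorm v ≤ hammingNorm (D1.mulVec v))
    (hXbar : HZ.mulVec (fun i => if i ∈ Finset.univ.image q then (1 : ZMod 2) else 0) = 0)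
    (X2 : Fin n → ZMod 2)
    (hX2 : HZ.mulVec X2 = 0)
    (hw2 : d ≤ hammingNorm X2)
    (hsum : d ≤ hammingNorm
      (fun i => (if i ∈ Finset.univ.image q then (1 : ZMod 2) else 0) + X2 i)) :
    ∀ v : Fin w → ZMod 2,
      d ≤ hammingNorm (Sum.elim
        (fun i => X2 i +
          (Matrix.of fun i j => if i = q j then (1 : ZMod 2) else 0).mulVec v i)
        (D1.mulVec v)) := by
  intro v
  set F1 : Matrix (Fin n) (Fin w) (ZMod 2) :=
    Matrix.of fun i j => if i = q j then (1 : ZMod 2) else 0 with hF1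
  rw [my_hn_elim]
  by_cases hv2 : 2 * hammingNorm v ≤ w
  · by_cases hv0 : v = 0
    · subst hv0
      simp only [Matrix.mulVec_zero, Pi.zero_apply, add_zero, hammingNorm_zero]
      simpa using hw2
    · have hch := hcheeger v hv0 hv2
      have h1 := my_tri X2 (F1.mulVec v)
      rw [my_f1_norm hq] at h1
      have e : X2 + F1.mulVec v = fun i => X2 i + F1.mulVec v i := rfl
      rw [e] at h1
      omega
  · push_neg at hv2
    set u : Fin w → ZMod 2 := fun j => 1 + v j with hu
    have hcu : hammingNorm u + hammingNorm v = w := my_compl v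
    by_cases hu0 : u = 0
    · have hv1 : v = fun _ => 1 := by
        funext j
        have h2 := congrFun hu0 j
        have : ∀ x : ZMod 2, 1 + x = 0 → x = 1 := by decide
        exact this _ h2
      subst hv1
      rw [heven, my_f1_one hq]
      simp only [hammingNorm_zero, add_zero]
      have ecomm : (fun i => X2 i + if i ∈ Finset.univ.image q then (1 : ZMod 2) else 0)
          = fun i => (if i ∈ Finset.univ.image q then (1 : ZMod 2) else 0) + X2 i := by
        funext i; exact add_comm _ _
      rw [ecomm]
      exact hsum
    · have hu2 : 2 * hammingNorm u ≤ w := by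
        have := hammingNorm_le_card_fintype (x := v)
        simp only [Fintype.card_fin] at this
        omega
      have hch := hcheeger u hu0 hu2
      have hD : D1.mulVec v = D1.mulVec u := by
        have : u = (fun _ => 1) + v := rfl
        rw [this, Matrix.mulVec_add, heven, zero_add]
      have key : (fun i => (if i ∈ Finset.univ.image q then (1 : ZMod 2) else 0) + X2 i)
          + F1.mulVec u = fun i => X2 i + F1.mulVec v i := by
        funext i
        have hux : F1.mulVec u i = F1.mulVec (fun _ => 1) i + F1.mulVec v i := by
          have : u = (fun _ => 1) + v := rfl
          rw [this, Matrix.mulVec_add]; rfl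
        have hone := congrFun (my_f1_one hq) i
        rw [Pi.add_apply, hux, hone]
        have : ∀ a b c : ZMod 2, a + b + (a + c) = b + c := by decide
        exact this _ _ _
      have h1 := my_tri
        (fun i => (if i ∈ Finset.univ.image q then (1 : ZMod 2) else 0) + X2 i) (F1.mulVec u)
      rw [key, my_f1_norm hq] at h1
      rw [hD]
      omega
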